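/- Let 0<q<1 and let z be a complex number. Then |A_q((1−q)z)| ≤ e^{q|z|}. -/

import Mathlib

/-- The finite q-Pochhammer symbol `(q; q)_k = ∏_{j=1}^{k} (1 - q^j)`. -/
noncomputable def qPochK (a q : ℝ) (k : ℕ) : ℝ := ∏ j ∈ Finset.range k, (1 - a * q ^ j)

/-- Ramanujan's entire function `A_q(z) = ∑_{k=0}^∞ q^{k²} (-z)^k / (q;q)_k`. -/
noncomputable def Aq (q : ℝ) (z : ℂ) : ℂ :=
  ∑' k : ℕ, ((q : ℂ) ^ (k ^ 2) * (-z) ^ k / ((qPochK q q k : ℝ) : ℂ))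

lemma qPochK_pos {q : ℝ} (hq0 : 0 < q) (hq1 : q < 1) (k : ℕ) : 0 < qPochK q q k := by
  apply Finset.prod_pos
  intro j _
  have h1 : q * q ^ j ≤ q * 1 := by
    apply mul_le_mul_of_nonneg_left _ hq0.le
    exact pow_le_one₀ hq0.le hq1.le
  nlinarith

lemma geom_lower {q : ℝ} (hq0 : 0 < q) (hq1 : q < 1) (k : ℕ) :
    (k + 1 : ℝ) * (1 - q) * q ^ k ≤ 1 - q ^ (k + 1) := by
  have hgeom : (1 - q) * ∑ i ∈ Finset.range (k + 1), q ^ i = 1 - q ^ (k + 1) := by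
    have := geom_sum_mul q (k + 1)
    nlinarith [this]
  have hsum : (k + 1 : ℝ) * q ^ k ≤ ∑ i ∈ Finset.range (k + 1), q ^ i := by
    calc (k + 1 : ℝ) * q ^ k = ∑ _i ∈ Finset.range (k + 1), q ^ k := by
          simp [Finset.sum_const, mul_comm]
      _ ≤ ∑ i ∈ Finset.range (k + 1), q ^ i := by
          apply Finset.sum_le_sum
          intro i hi
          exact pow_le_pow_of_le_one hq0.le hq1.le (Nat.lt_succ_iff.mp (Finset.mem_range.mp hi))
  nlinarith

lemma key_ineq {q : ℝ} (hq0 : 0 < q) (hq1 : q < 1) (k : ℕ) :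
    (k.factorial : ℝ) * q ^ (k ^ 2) * (1 - q) ^ k ≤ q ^ k * qPochK q q k := by
  induction k with
  | zero => simp [qPochK]
  | succ k ih =>
    have hp := qPochK_pos hq0 hq1 k
    have hgl := geom_lower hq0 hq1 k
    have hfac : (0 : ℝ) ≤ 1 - q := by linarith
    have hq2k : q ^ ((k+1) ^ 2) ≤ q ^ (k ^ 2 + k + 1) := by
      apply pow_le_pow_of_le_one hq0.le hq1.le
      ring_nf
      omega
    have hpos1 : (0:ℝ) < (k+1 : ℝ) * (1-q) * q^(k+1) := by
      have h1q : (0:ℝ) < 1 - q := by linarith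
      positivity
    -- multiply ih by (k+1)*(1-q)*q^(k+1)
    have step : ((k+1).factorial : ℝ) * q ^ (k ^ 2 + k + 1) * (1 - q) ^ (k+1)
        ≤ q ^ (k+1) * ((k+1:ℝ) * (1-q) * q^k * qPochK q q k) := by
      have := mul_le_mul_of_nonneg_left ih hpos1.le
      have hfa : ((k+1).factorial : ℝ) = ((k:ℝ)+1) * (k.factorial : ℝ) := by
        rw [Nat.factorial_succ]; push_cast; ring
      calc ((k+1).factorial : ℝ) * q ^ (k ^ 2 + k + 1) * (1 - q) ^ (k+1)
          = ((k+1:ℝ) * (1-q) * q^(k+1)) * ((k.factorial : ℝ) * q ^ (k ^ 2) * (1 - q) ^ k) := by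
            rw [hfa]; ring
        _ ≤ ((k+1:ℝ) * (1-q) * q^(k+1)) * (q ^ k * qPochK q q k) := this
        _ = q ^ (k+1) * ((k+1:ℝ) * (1-q) * q^k * qPochK q q k) := by ring
    have step2 : (k+1:ℝ) * (1-q) * q^k * qPochK q q k ≤ (1 - q^(k+1)) * qPochK q q k :=
      mul_le_mul_of_nonneg_right hgl hp.le
    have hpoch : qPochK q q (k+1) = qPochK q q k * (1 - q * q ^ k) := by
      unfold qPochK
      rw [Finset.prod_range_succ]
    have hfinal : ((k+1).factorial : ℝ) * q ^ ((k+1) ^ 2) * (1 - q) ^ (k+1)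
        ≤ ((k+1).factorial : ℝ) * q ^ (k ^ 2 + k + 1) * (1 - q) ^ (k+1) := by
      apply mul_le_mul_of_nonneg_right _ (pow_nonneg hfac _)
      exact mul_le_mul_of_nonneg_left hq2k (by positivity)
    have hq1k : q * q ^ k = q ^ (k+1) := by rw [pow_succ]; ring
    rw [hpoch, hq1k]
    have hqpos : (0:ℝ) < q^(k+1) := pow_pos hq0 _
    nlinarith [step, step2, hfinal]

theorem stmt8 (q : ℝ) (hq0 : 0 < q) (hq1 : q < 1) (z : ℂ) :
    ‖Aq q (((1 - q : ℝ) : ℂ) * z)‖ ≤ Real.exp (q * ‖z‖) := by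
  set f : ℕ → ℂ := fun k =>
    (q : ℂ) ^ (k ^ 2) * (-(((1 - q : ℝ) : ℂ) * z)) ^ k / ((qPochK q q k : ℝ) : ℂ) with hf
  set g : ℕ → ℝ := fun k => (q * ‖z‖) ^ k / k.factorial with hg
  have hgs : Summable g := Real.summable_pow_div_factorial _
  have hbound : ∀ k, ‖f k‖ ≤ g k := by
    intro k
    have hp := qPochK_pos hq0 hq1 k
    have hfn : ‖f k‖ = q ^ (k^2) * ((1-q) * ‖z‖) ^ k / qPochK q q k := by
      simp only [hf, norm_div, norm_mul, norm_pow, norm_neg, Complex.norm_real,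
        Real.norm_eq_abs]
      rw [abs_of_nonneg hq0.le, abs_of_nonneg (by linarith : (0:ℝ) ≤ 1 - q),
        abs_of_nonneg hp.le]
    rw [hfn, hg]
    rw [div_le_div_iff₀ hp (by positivity : (0:ℝ) < (k.factorial : ℝ))]
    have key := key_ineq hq0 hq1 k
    have habs : (0:ℝ) ≤ ‖z‖ ^ k := by positivity
    calc q ^ (k^2) * ((1-q) * ‖z‖) ^ k * (k.factorial : ℝ)
        = ((k.factorial : ℝ) * q ^ (k ^ 2) * (1 - q) ^ k) * ‖z‖ ^ k := by
          rw [mul_pow]; ring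
      _ ≤ (q ^ k * qPochK q q k) * ‖z‖ ^ k :=
          mul_le_mul_of_nonneg_right key habs
      _ = (q * ‖z‖) ^ k * qPochK q q k := by rw [mul_pow]; ring
  have hfs : Summable (fun k => ‖f k‖) :=
    Summable.of_nonneg_of_le (fun k => norm_nonneg _) hbound hgs
  have h1 : ‖Aq q (((1 - q : ℝ) : ℂ) * z)‖ ≤ ∑' k, ‖f k‖ := by
    rw [Aq]
    exact norm_tsum_le_tsum_norm hfs
  have h2 : ∑' k, ‖f k‖ ≤ ∑' k, g k := Summable.tsum_le_tsum hbound hfs hgs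
  have h3 : ∑' k, g k = Real.exp (q * ‖z‖) := by
    rw [Real.exp_eq_exp_ℝ, NormedSpace.exp_eq_tsum_div]
  linarith
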